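/- Let M be a contraction on a Banach space X and P a projection with ‖M^n − P‖_{X→X} ≤ δ^n for some δ ∈ (0,1) and all n ∈ ℕ. Let V(t,s) be a contractive C₀-evolution system satisfying the asymptotic Zeno condition ‖P V(t,s)(1−P)‖, ‖(1−P) V(t,s) P‖ ≤ (t−s)b. Then for every x ∈ X and the equidistant partition s_j = jt/n: ‖∏_{j=1}^n M V(s_j,s_{j-1}) x − ∏_{j=1}^n P V(s_j,s_{j-1}) P x‖_X ≤ (δ^n + tb/n + (1/n)·(tb(2+tb)(δ−δ^n)/(1−δ))·e^{2b}) ‖x‖_X. -/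

import Mathlib

open Set

variable {X : Type*} [NormedAddCommGroup X] [NormedSpace ℝ X] [CompleteSpace X]

def IsEvolutionSystem (T : ℝ → ℝ → X →L[ℝ] X) (T₀ : ℝ) : Prop :=
  (∀ t, t ∈ Icc 0 T₀ → T t t = 1) ∧
    (∀ t r s, 0 ≤ s → s ≤ r → r ≤ t → t ≤ T₀ → T t r ∘L T r s = T t s) ∧
    ∀ x : X, ContinuousOn (fun p : ℝ × ℝ => T p.1 p.2 x)
      {p : ℝ × ℝ | 0 ≤ p.2 ∧ p.2 ≤ p.1 ∧ p.1 ≤ T₀}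

def IsContractionEvolutionSystem (T : ℝ → ℝ → X →L[ℝ] X) (T₀ : ℝ) : Prop :=
  IsEvolutionSystem T T₀ ∧ ∀ t s, 0 ≤ s → s ≤ t → t ≤ T₀ → ‖T t s‖ ≤ 1

/-- Product of `f j` over `j ∈ [a, a+m-1]` in decreasing index order. -/
def zenoProd (f : ℕ → X →L[ℝ] X) (a m : ℕ) : X →L[ℝ] X :=
  ((List.range' a m).reverse.map f).prod

theorem zenoProd_zero (f : ℕ → X →L[ℝ] X) (a : ℕ) : zenoProd f a 0 = 1 := rfl

theorem zenoProd_succ (f : ℕ → X →L[ℝ] X) (a m : ℕ) :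
    zenoProd f a (m+1) = zenoProd f (a+1) m * f a := by
  simp [zenoProd, List.range'_succ]

theorem zenoProd_norm_le (f : ℕ → X →L[ℝ] X) (hf : ∀ j, ‖f j‖ ≤ 1) :
    ∀ m a, ‖zenoProd f a m‖ ≤ 1 := by
  intro m
  induction m with
  | zero =>
    intro a
    rw [zenoProd_zero, ContinuousLinearMap.one_def]
    exact ContinuousLinearMap.norm_id_le
  | succ m ih =>
    intro a
    rw [zenoProd_succ]
    calc ‖zenoProd f (a+1) m * f a‖ ≤ ‖zenoProd f (a+1) m‖ * ‖f a‖ := norm_mul_le _ _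
    _ ≤ 1 * 1 := mul_le_mul (ih (a+1)) (hf a) (norm_nonneg _) zero_le_one
    _ = 1 := mul_one 1

/-- Run lemma: applying the Zeno product to a vector annihilated by `P`. -/
theorem zeno_run (M P : X →L[ℝ] X) (δ c : ℝ) (W : ℕ → X →L[ℝ] X)
    (hδ : 0 ≤ δ) (hc : 0 ≤ c)
    (hMn : ‖M‖ ≤ 1) (hQn : ‖M - P‖ ≤ δ) (hPM : P * M = P) (hPP : P * P = P)
    (hW : ∀ j, ‖W j‖ ≤ 1) (hZ1 : ∀ j, ‖P * W j * (1 - P)‖ ≤ c) :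
    ∀ m a (u : X), P u = 0 →
      ‖zenoProd (fun j => M * W j) a m u‖
        ≤ (c * (∑ k ∈ Finset.range m, δ ^ k) + δ ^ m) * ‖u‖ := by
  intro m
  induction m with
  | zero => intro a u hu; simp [zenoProd_zero]
  | succ m ih =>
    intro a u hu
    have hSnn : (0:ℝ) ≤ ∑ k ∈ Finset.range m, δ ^ k :=
      Finset.sum_nonneg fun k _ => pow_nonneg hδ k
    have hAnorm : ‖zenoProd (fun j => M * W j) (a+1) m‖ ≤ 1 := by
      refine zenoProd_norm_le _ (fun j => ?_) m (a+1)
      calc ‖M * W j‖ ≤ ‖M‖ * ‖W j‖ := norm_mul_le _ _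
      _ ≤ 1 := mul_le_one₀ hMn (norm_nonneg _) (hW j)
    have h1u : (1 - P) u = u := by
      simp [ContinuousLinearMap.sub_apply, hu]
    have key : zenoProd (fun j => M * W j) a (m+1) u
        = zenoProd (fun j => M * W j) (a+1) m ((P * W a * (1 - P)) u)
          + zenoProd (fun j => M * W j) (a+1) m (((M - P) * W a) u) := by
      rw [zenoProd_succ]
      have e1 : (zenoProd (fun j => M * W j) (a+1) m * (M * W a)) u
          = zenoProd (fun j => M * W j) (a+1) m ((M * W a) u) :=
        ContinuousLinearMap.mul_apply _ _ _
      rw [e1, ← map_add]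
      congr 1
      simp only [ContinuousLinearMap.mul_apply, ContinuousLinearMap.sub_apply, h1u]
      abel
    have hu2 : P (((M - P) * W a) u) = 0 := by
      have h0 : P * ((M - P) * W a) = 0 := by
        rw [← mul_assoc, mul_sub, hPM, hPP, sub_self, zero_mul]
      have : P (((M - P) * W a) u) = (P * ((M - P) * W a)) u :=
        (ContinuousLinearMap.mul_apply _ _ _).symm
      rw [this, h0, ContinuousLinearMap.zero_apply]
    have hu2n : ‖((M - P) * W a) u‖ ≤ δ * ‖u‖ := by
      rw [ContinuousLinearMap.mul_apply]
      calc ‖(M - P) ((W a) u)‖ ≤ ‖M - P‖ * ‖(W a) u‖ := (M - P).le_opNorm _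
      _ ≤ δ * ‖(W a) u‖ := mul_le_mul_of_nonneg_right hQn (norm_nonneg _)
      _ ≤ δ * ‖u‖ := mul_le_mul_of_nonneg_left
            (((W a).le_opNorm u).trans (mul_le_of_le_one_left (norm_nonneg u) (hW a))) hδ
    have t1 : ‖zenoProd (fun j => M * W j) (a+1) m ((P * W a * (1 - P)) u)‖ ≤ c * ‖u‖ := by
      calc ‖zenoProd (fun j => M * W j) (a+1) m ((P * W a * (1 - P)) u)‖
          ≤ ‖zenoProd (fun j => M * W j) (a+1) m‖ * ‖(P * W a * (1 - P)) u‖ :=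
            ContinuousLinearMap.le_opNorm _ _
      _ ≤ 1 * ‖(P * W a * (1 - P)) u‖ :=
            mul_le_mul_of_nonneg_right hAnorm (norm_nonneg _)
      _ = ‖(P * W a * (1 - P)) u‖ := one_mul _
      _ ≤ ‖P * W a * (1 - P)‖ * ‖u‖ := ContinuousLinearMap.le_opNorm _ _
      _ ≤ c * ‖u‖ := mul_le_mul_of_nonneg_right (hZ1 a) (norm_nonneg _)
    have t2 : ‖zenoProd (fun j => M * W j) (a+1) m (((M - P) * W a) u)‖
        ≤ (c * (∑ k ∈ Finset.range m, δ ^ k) + δ ^ m) * (δ * ‖u‖) := by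
      refine (ih (a+1) _ hu2).trans ?_
      exact mul_le_mul_of_nonneg_left hu2n
        (add_nonneg (mul_nonneg hc hSnn) (pow_nonneg hδ m))
    calc ‖zenoProd (fun j => M * W j) a (m+1) u‖
        = ‖zenoProd (fun j => M * W j) (a+1) m ((P * W a * (1 - P)) u)
            + zenoProd (fun j => M * W j) (a+1) m (((M - P) * W a) u)‖ := by rw [key]
    _ ≤ ‖zenoProd (fun j => M * W j) (a+1) m ((P * W a * (1 - P)) u)‖
          + ‖zenoProd (fun j => M * W j) (a+1) m (((M - P) * W a) u)‖ := norm_add_le _ _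
    _ ≤ c * ‖u‖ + (c * (∑ k ∈ Finset.range m, δ ^ k) + δ ^ m) * (δ * ‖u‖) := add_le_add t1 t2
    _ = (c * (∑ k ∈ Finset.range (m+1), δ ^ k) + δ ^ (m+1)) * ‖u‖ := by
        rw [geom_sum_succ]
        ring

/-- Main inductive lemma: the Zeno product difference on vectors fixed by `P`. -/
theorem zeno_main (M P : X →L[ℝ] X) (δ c : ℝ) (W : ℕ → X →L[ℝ] X)
    (hδ : 0 ≤ δ) (hc : 0 ≤ c)
    (hMn : ‖M‖ ≤ 1) (hPn : ‖P‖ ≤ 1) (hQn : ‖M - P‖ ≤ δ)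
    (hPM : P * M = P) (hMPe : M * P = P) (hPP : P * P = P)
    (hW : ∀ j, ‖W j‖ ≤ 1) (hZ1 : ∀ j, ‖P * W j * (1 - P)‖ ≤ c)
    (hZ2 : ∀ j, ‖(1 - P) * W j * P‖ ≤ c) :
    ∀ m a (y : X), P y = y →
      ‖zenoProd (fun j => M * W j) a m y - zenoProd (fun j => P * W j * P) a m y‖
        ≤ (c * δ * (∑ k ∈ Finset.range m, δ ^ k)
            + c * c * δ * m * (∑ k ∈ Finset.range m, δ ^ k)) * ‖y‖ := by
  intro m
  induction m with
  | zero => intro a y hy; simp [zenoProd_zero]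
  | succ m ih =>
    intro a y hy
    have hSnn : (0:ℝ) ≤ ∑ k ∈ Finset.range m, δ ^ k :=
      Finset.sum_nonneg fun k _ => pow_nonneg hδ k
    have hgnn : (0:ℝ) ≤ c * δ * (∑ k ∈ Finset.range m, δ ^ k)
        + c * c * δ * m * (∑ k ∈ Finset.range m, δ ^ k) :=
      add_nonneg (mul_nonneg (mul_nonneg hc hδ) hSnn)
        (mul_nonneg (mul_nonneg (mul_nonneg (mul_nonneg hc hc) hδ) (Nat.cast_nonneg m)) hSnn)
    have key : zenoProd (fun j => M * W j) a (m+1) y - zenoProd (fun j => P * W j * P) a (m+1) y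
        = (zenoProd (fun j => M * W j) (a+1) m ((P * W a * P) y)
            - zenoProd (fun j => P * W j * P) (a+1) m ((P * W a * P) y))
          + zenoProd (fun j => M * W j) (a+1) m (((M - P) * W a) y) := by
      rw [zenoProd_succ, zenoProd_succ]
      have e1 : (zenoProd (fun j => M * W j) (a+1) m * (M * W a)) y
          = zenoProd (fun j => M * W j) (a+1) m ((M * W a) y) :=
        ContinuousLinearMap.mul_apply _ _ _
      have e2 : (zenoProd (fun j => P * W j * P) (a+1) m * (P * W a * P)) y
          = zenoProd (fun j => P * W j * P) (a+1) m ((P * W a * P) y) :=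
        ContinuousLinearMap.mul_apply _ _ _
      have h2 : (M * W a) y = (P * W a * P) y + ((M - P) * W a) y := by
        simp only [ContinuousLinearMap.mul_apply, ContinuousLinearMap.sub_apply, hy]
        abel
      rw [e1, e2, h2, map_add]
      abel
    have hy' : P ((P * W a * P) y) = (P * W a * P) y := by
      have h0 : P * (P * W a * P) = P * W a * P := by
        rw [← mul_assoc, ← mul_assoc, hPP]
      have : P ((P * W a * P) y) = (P * (P * W a * P)) y :=
        (ContinuousLinearMap.mul_apply _ _ _).symm
      rw [this, h0]
    have hy'n : ‖(P * W a * P) y‖ ≤ ‖y‖ := by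
      calc ‖(P * W a * P) y‖ ≤ ‖P * W a * P‖ * ‖y‖ := ContinuousLinearMap.le_opNorm _ _
      _ ≤ 1 * ‖y‖ := by
          refine mul_le_mul_of_nonneg_right ?_ (norm_nonneg _)
          calc ‖P * W a * P‖ ≤ ‖P * W a‖ * ‖P‖ := norm_mul_le _ _
          _ ≤ ‖P * W a‖ := mul_le_of_le_one_right (norm_nonneg _) hPn
          _ ≤ ‖P‖ * ‖W a‖ := norm_mul_le _ _
          _ ≤ 1 := mul_le_one₀ hPn (norm_nonneg _) (hW a)
      _ = ‖y‖ := one_mul _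
    have hMPP : (M - P) * P = 0 := by rw [sub_mul, hMPe, hPP, sub_self]
    have hu0 : P (((M - P) * W a) y) = 0 := by
      have h0 : P * ((M - P) * W a) = 0 := by
        rw [← mul_assoc, mul_sub, hPM, hPP, sub_self, zero_mul]
      have : P (((M - P) * W a) y) = (P * ((M - P) * W a)) y :=
        (ContinuousLinearMap.mul_apply _ _ _).symm
      rw [this, h0, ContinuousLinearMap.zero_apply]
    have huid : ((M - P) * W a) y = ((M - P) * ((1 - P) * W a * P)) y := by
      have h3 : (M - P) (P ((W a) y)) = 0 := by
        have : (M - P) (P ((W a) y)) = ((M - P) * P) ((W a) y) :=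
          (ContinuousLinearMap.mul_apply _ _ _).symm
        rw [this, hMPP, ContinuousLinearMap.zero_apply]
      simp only [ContinuousLinearMap.mul_apply, ContinuousLinearMap.sub_apply,
        ContinuousLinearMap.one_apply, hy, map_sub, h3]
      abel
    have hun : ‖((M - P) * W a) y‖ ≤ δ * (c * ‖y‖) := by
      rw [huid, ContinuousLinearMap.mul_apply]
      calc ‖(M - P) (((1 - P) * W a * P) y)‖
          ≤ ‖M - P‖ * ‖((1 - P) * W a * P) y‖ := (M - P).le_opNorm _
      _ ≤ δ * ‖((1 - P) * W a * P) y‖ := mul_le_mul_of_nonneg_right hQn (norm_nonneg _)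
      _ ≤ δ * (c * ‖y‖) := by
          refine mul_le_mul_of_nonneg_left ?_ hδ
          calc ‖((1 - P) * W a * P) y‖ ≤ ‖(1 - P) * W a * P‖ * ‖y‖ :=
                ContinuousLinearMap.le_opNorm _ _
          _ ≤ c * ‖y‖ := mul_le_mul_of_nonneg_right (hZ2 a) (norm_nonneg _)
    have t1 : ‖zenoProd (fun j => M * W j) (a+1) m ((P * W a * P) y)
        - zenoProd (fun j => P * W j * P) (a+1) m ((P * W a * P) y)‖
        ≤ (c * δ * (∑ k ∈ Finset.range m, δ ^ k)
            + c * c * δ * m * (∑ k ∈ Finset.range m, δ ^ k)) * ‖y‖ := by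
      refine (ih (a+1) _ hy').trans ?_
      exact mul_le_mul_of_nonneg_left hy'n hgnn
    have t2 : ‖zenoProd (fun j => M * W j) (a+1) m (((M - P) * W a) y)‖
        ≤ (c * (∑ k ∈ Finset.range m, δ ^ k) + δ ^ m) * (δ * (c * ‖y‖)) := by
      refine ((zeno_run M P δ c W hδ hc hMn hQn hPM hPP hW hZ1 m (a+1) _ hu0).trans ?_)
      exact mul_le_mul_of_nonneg_left hun
        (add_nonneg (mul_nonneg hc hSnn) (pow_nonneg hδ m))
    calc ‖zenoProd (fun j => M * W j) a (m+1) y - zenoProd (fun j => P * W j * P) a (m+1) y‖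
        = ‖(zenoProd (fun j => M * W j) (a+1) m ((P * W a * P) y)
            - zenoProd (fun j => P * W j * P) (a+1) m ((P * W a * P) y))
          + zenoProd (fun j => M * W j) (a+1) m (((M - P) * W a) y)‖ := by rw [key]
    _ ≤ ‖zenoProd (fun j => M * W j) (a+1) m ((P * W a * P) y)
            - zenoProd (fun j => P * W j * P) (a+1) m ((P * W a * P) y)‖
          + ‖zenoProd (fun j => M * W j) (a+1) m (((M - P) * W a) y)‖ := norm_add_le _ _
    _ ≤ (c * δ * (∑ k ∈ Finset.range m, δ ^ k)
            + c * c * δ * m * (∑ k ∈ Finset.range m, δ ^ k)) * ‖y‖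
          + (c * (∑ k ∈ Finset.range m, δ ^ k) + δ ^ m) * (δ * (c * ‖y‖)) := add_le_add t1 t2
    _ ≤ (c * δ * (∑ k ∈ Finset.range (m+1), δ ^ k)
            + c * c * δ * (m+1) * (∑ k ∈ Finset.range (m+1), δ ^ k)) * ‖y‖ := by
        rw [Finset.sum_range_succ]
        have hm : (0:ℝ) ≤ (m:ℝ) := Nat.cast_nonneg m
        have hynn : (0:ℝ) ≤ ‖y‖ := norm_nonneg y
        nlinarith [mul_nonneg (mul_nonneg (mul_nonneg (mul_nonneg hc hc) hδ)
            (by linarith : (0:ℝ) ≤ (m:ℝ)+1)) (mul_nonneg (pow_nonneg hδ m) hynn)]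
    _ = (c * δ * (∑ k ∈ Finset.range (m+1), δ ^ k)
            + c * c * δ * (↑(m+1)) * (∑ k ∈ Finset.range (m+1), δ ^ k)) * ‖y‖ := by
        push_cast
        ring

set_option maxHeartbeats 1000000 in
/-- replacing the contraction `M` by the projection `P` in the Zeno
product: if `‖Mⁿ − P‖ ≤ δⁿ` and the asymptotic Zeno condition holds, then
`‖∏ M V(s_j,s_{j-1}) x − ∏ P V(s_j,s_{j-1}) P x‖
  ≤ (δⁿ + tb/n + (1/n)(tb(2+tb)(δ−δⁿ)/(1−δ)) e^{2b}) ‖x‖`. -/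
theorem stmt11 (T₀ : ℝ) (hT₀ : 0 ≤ T₀)
    (M P : X →L[ℝ] X) (hM : ‖M‖ ≤ 1) (hP : P ∘L P = P)
    (δ : ℝ) (hδ0 : 0 < δ) (hδ1 : δ < 1)
    (hMP : ∀ n : ℕ, ‖M ^ n - P‖ ≤ δ ^ n)
    (V : ℝ → ℝ → X →L[ℝ] X) (hV : IsContractionEvolutionSystem V T₀)
    (b : ℝ) (hb : 0 ≤ b)
    (hZeno : ∀ t s, 0 ≤ s → s ≤ t → t ≤ T₀ →
      ‖P ∘L V t s ∘L (1 - P)‖ ≤ (t - s) * b ∧ ‖(1 - P) ∘L V t s ∘L P‖ ≤ (t - s) * b) :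
    ∀ (x : X), ∀ t ∈ Icc 0 T₀, ∀ n : ℕ, 1 ≤ n →
      ‖(((List.range' 1 n).reverse.map (fun j =>
            M ∘L V ((j : ℝ) * t / n) (((j : ℝ) - 1) * t / n))).prod) x -
          (((List.range' 1 n).reverse.map (fun j =>
            P ∘L V ((j : ℝ) * t / n) (((j : ℝ) - 1) * t / n) ∘L P)).prod) x‖ ≤
        (δ ^ n + t * b / n +
            (1 / n) * (t * b * (2 + t * b) * (δ - δ ^ n) / (1 - δ)) * Real.exp (2 * b)) *
          ‖x‖ := by
  have hδnn : (0:ℝ) ≤ δ := hδ0.le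
  have hPP : P * P = P := by rw [ContinuousLinearMap.mul_def]; exact hP
  -- limit facts
  have hlim : Filter.Tendsto (fun k : ℕ => δ ^ k) Filter.atTop (nhds 0) :=
    tendsto_pow_atTop_nhds_zero_of_lt_one hδnn hδ1
  have hMpow : ∀ k : ℕ, ‖M ^ k‖ ≤ 1 := by
    intro k
    induction k with
    | zero => rw [pow_zero, ContinuousLinearMap.one_def]; exact ContinuousLinearMap.norm_id_le
    | succ k ih =>
      rw [pow_succ]
      calc ‖M ^ k * M‖ ≤ ‖M ^ k‖ * ‖M‖ := norm_mul_le _ _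
      _ ≤ 1 := by nlinarith [norm_nonneg (M ^ k), norm_nonneg M]
  have hPM : P * M = P := by
    have hb' : ∀ k : ℕ, ‖P * M - P‖ ≤ δ ^ k * (δ + 1) := by
      intro k
      have hid : P * M - P = (M ^ (k+1) - P) - (M ^ k - P) * M := by
        rw [pow_succ]
        noncomm_ring
      calc ‖P * M - P‖ = ‖(M ^ (k+1) - P) - (M ^ k - P) * M‖ := by rw [hid]
      _ ≤ ‖M ^ (k+1) - P‖ + ‖(M ^ k - P) * M‖ := norm_sub_le _ _
      _ ≤ δ ^ (k+1) + ‖M ^ k - P‖ * ‖M‖ := add_le_add (hMP _) (norm_mul_le _ _)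
      _ ≤ δ ^ k * (δ + 1) := by
          have h1 := hMP k
          have h2 := norm_nonneg (M ^ k - P)
          have h3 := norm_nonneg M
          nlinarith [pow_succ δ k, pow_nonneg hδnn k]
    have hlim2 : Filter.Tendsto (fun k : ℕ => δ ^ k * (δ + 1)) Filter.atTop (nhds 0) := by
      simpa using hlim.mul_const (δ + 1)
    have h0 : ‖P * M - P‖ ≤ 0 := ge_of_tendsto' hlim2 hb'
    have : P * M - P = 0 := by rwa [← norm_le_zero_iff]
    exact sub_eq_zero.mp this
  have hMPe : M * P = P := by
    have hb' : ∀ k : ℕ, ‖M * P - P‖ ≤ δ ^ k * (δ + 1) := by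
      intro k
      have hid : M * P - P = (M ^ (k+1) - P) - M * (M ^ k - P) := by
        rw [pow_succ']
        noncomm_ring
      calc ‖M * P - P‖ = ‖(M ^ (k+1) - P) - M * (M ^ k - P)‖ := by rw [hid]
      _ ≤ ‖M ^ (k+1) - P‖ + ‖M * (M ^ k - P)‖ := norm_sub_le _ _
      _ ≤ δ ^ (k+1) + ‖M‖ * ‖M ^ k - P‖ := add_le_add (hMP _) (norm_mul_le _ _)
      _ ≤ δ ^ k * (δ + 1) := by
          have h1 := hMP k
          have h2 := norm_nonneg (M ^ k - P)
          have h3 := norm_nonneg M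
          nlinarith [pow_succ δ k, pow_nonneg hδnn k]
    have hlim2 : Filter.Tendsto (fun k : ℕ => δ ^ k * (δ + 1)) Filter.atTop (nhds 0) := by
      simpa using hlim.mul_const (δ + 1)
    have h0 : ‖M * P - P‖ ≤ 0 := ge_of_tendsto' hlim2 hb'
    have : M * P - P = 0 := by rwa [← norm_le_zero_iff]
    exact sub_eq_zero.mp this
  have hPn : ‖P‖ ≤ 1 := by
    have hb' : ∀ k : ℕ, ‖P‖ ≤ 1 + δ ^ k := by
      intro k
      have hid : P = M ^ k - (M ^ k - P) := by abel
      calc ‖P‖ = ‖M ^ k - (M ^ k - P)‖ := by rw [← hid]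
      _ ≤ ‖M ^ k‖ + ‖M ^ k - P‖ := norm_sub_le _ _
      _ ≤ 1 + δ ^ k := add_le_add (hMpow k) (hMP k)
    have hlim2 : Filter.Tendsto (fun k : ℕ => 1 + δ ^ k) Filter.atTop (nhds 1) := by
      have := hlim.const_add (1:ℝ)
      simpa using this
    exact ge_of_tendsto' hlim2 hb'
  have hQn : ‖M - P‖ ≤ δ := by simpa using hMP 1
  intro x t ht n hn
  have ht1 : 0 ≤ t := ht.1
  obtain ⟨m, rfl⟩ : ∃ m, n = m + 1 := ⟨n - 1, (Nat.succ_pred_eq_of_pos hn).symm⟩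
  have hnR : (0:ℝ) < ((m:ℝ) + 1) := by positivity
  have hnc : ((m+1 : ℕ) : ℝ) = (m:ℝ) + 1 := by push_cast; ring
  set c : ℝ := t * b / ((m+1 : ℕ) : ℝ) with hc_def
  have hc : 0 ≤ c := by
    rw [hc_def, hnc]
    positivity
  obtain ⟨W, hW_def⟩ : ∃ W : ℕ → X →L[ℝ] X, W = fun j =>
      if 1 ≤ j ∧ j ≤ m + 1 then
        V ((j : ℝ) * t / ((m+1 : ℕ) : ℝ)) (((j : ℝ) - 1) * t / ((m+1 : ℕ) : ℝ))
      else 1 := ⟨_, rfl⟩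
  -- per-index facts
  have hidx : ∀ j : ℕ, 1 ≤ j → j ≤ m + 1 →
      0 ≤ ((j : ℝ) - 1) * t / ((m+1 : ℕ) : ℝ) ∧
      ((j : ℝ) - 1) * t / ((m+1 : ℕ) : ℝ) ≤ (j : ℝ) * t / ((m+1 : ℕ) : ℝ) ∧
      (j : ℝ) * t / ((m+1 : ℕ) : ℝ) ≤ T₀ := by
    intro j hj1 hj2
    have hj1R : (1:ℝ) ≤ (j:ℝ) := by exact_mod_cast hj1
    have hj2R : (j:ℝ) ≤ (m:ℝ) + 1 := by exact_mod_cast hj2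
    rw [hnc]
    refine ⟨div_nonneg (mul_nonneg (by linarith) ht1) hnR.le, ?_, ?_⟩
    · rw [div_le_div_iff_of_pos_right hnR]
      nlinarith
    · have h1 : (j : ℝ) * t / ((m:ℝ) + 1) ≤ t := by
        rw [div_le_iff₀ hnR]
        nlinarith
      linarith [ht.2]
  have hW1 : ∀ j, ‖W j‖ ≤ 1 := by
    intro j
    rw [hW_def]
    by_cases h : 1 ≤ j ∧ j ≤ m + 1
    · obtain ⟨hs0, hss, hsT⟩ := hidx j h.1 h.2
      simp only [if_pos h]
      exact hV.2 _ _ hs0 hss hsT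
    · simp only [if_neg h]
      rw [ContinuousLinearMap.one_def]
      exact ContinuousLinearMap.norm_id_le
  have hstep : ∀ j : ℕ, 1 ≤ j → j ≤ m + 1 →
      ((j : ℝ) * t / ((m+1 : ℕ) : ℝ) - ((j : ℝ) - 1) * t / ((m+1 : ℕ) : ℝ)) * b = c := by
    intro j _ _
    rw [hc_def]
    ring
  have hZ1 : ∀ j, ‖P * W j * (1 - P)‖ ≤ c := by
    intro j
    rw [hW_def]
    by_cases h : 1 ≤ j ∧ j ≤ m + 1
    · obtain ⟨hs0, hss, hsT⟩ := hidx j h.1 h.2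
      simp only [if_pos h]
      have hz := (hZeno _ _ hs0 hss hsT).1
      rw [hstep j h.1 h.2] at hz
      calc ‖P * V ((j : ℝ) * t / ((m+1 : ℕ) : ℝ)) (((j : ℝ) - 1) * t / ((m+1 : ℕ) : ℝ)) * (1 - P)‖
          = ‖P ∘L V ((j : ℝ) * t / ((m+1 : ℕ) : ℝ)) (((j : ℝ) - 1) * t / ((m+1 : ℕ) : ℝ)) ∘L (1 - P)‖ := by
            rw [mul_assoc, ContinuousLinearMap.mul_def, ContinuousLinearMap.mul_def]
      _ ≤ c := hz
    · simp only [if_neg h]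
      rw [mul_one, mul_sub, mul_one, hPP, sub_self, norm_zero]
      exact hc
  have hZ2 : ∀ j, ‖(1 - P) * W j * P‖ ≤ c := by
    intro j
    rw [hW_def]
    by_cases h : 1 ≤ j ∧ j ≤ m + 1
    · obtain ⟨hs0, hss, hsT⟩ := hidx j h.1 h.2
      simp only [if_pos h]
      have hz := (hZeno _ _ hs0 hss hsT).2
      rw [hstep j h.1 h.2] at hz
      calc ‖(1 - P) * V ((j : ℝ) * t / ((m+1 : ℕ) : ℝ)) (((j : ℝ) - 1) * t / ((m+1 : ℕ) : ℝ)) * P‖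
          = ‖(1 - P) ∘L V ((j : ℝ) * t / ((m+1 : ℕ) : ℝ)) (((j : ℝ) - 1) * t / ((m+1 : ℕ) : ℝ)) ∘L P‖ := by
            rw [mul_assoc, ContinuousLinearMap.mul_def, ContinuousLinearMap.mul_def]
      _ ≤ c := hz
    · simp only [if_neg h]
      rw [mul_one, sub_mul, one_mul, hPP, sub_self, norm_zero]
      exact hc
  -- rewrite the statement's products as zenoProd
  have hAeq : (((List.range' 1 (m+1)).reverse.map (fun j =>
        M ∘L V ((j : ℝ) * t / ((m+1:ℕ) : ℝ)) (((j : ℝ) - 1) * t / ((m+1:ℕ) : ℝ)))).prod)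
      = zenoProd (fun j => M * W j) 1 (m+1) := by
    have hco : (((List.range' 1 (m+1)).reverse.map (fun j =>
          M ∘L V ((j : ℝ) * t / ((m+1:ℕ) : ℝ)) (((j : ℝ) - 1) * t / ((m+1:ℕ) : ℝ)))).prod)
        = ((((List.range' 1 (m+1)).reverse : List ℕ)).map (fun j : ℕ =>
          M ∘L V ((j : ℝ) * t / ((m+1:ℕ) : ℝ)) (((j : ℝ) - 1) * t / ((m+1:ℕ) : ℝ)))).prod := by
      congr 1
      induction (List.range' 1 (m+1)).reverse with
      | nil => rfl
      | cons a l ih =>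
        simp only [List.flatMap_cons, List.map_cons, List.singleton_append, List.map_append]
        rw [← ih]
        rfl
    rw [hco, zenoProd]
    congr 1
    refine List.map_congr_left ?_
    intro j hj
    rw [List.mem_reverse, List.mem_range'_1] at hj
    have h : 1 ≤ j ∧ j ≤ m + 1 := ⟨hj.1, by omega⟩
    rw [hW_def]
    simp only [if_pos h]
    rw [ContinuousLinearMap.mul_def]
  have hBeq : (((List.range' 1 (m+1)).reverse.map (fun j =>
        P ∘L V ((j : ℝ) * t / ((m+1:ℕ) : ℝ)) (((j : ℝ) - 1) * t / ((m+1:ℕ) : ℝ)) ∘L P)).prod)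
      = zenoProd (fun j => P * W j * P) 1 (m+1) := by
    have hco : (((List.range' 1 (m+1)).reverse.map (fun j =>
          P ∘L V ((j : ℝ) * t / ((m+1:ℕ) : ℝ)) (((j : ℝ) - 1) * t / ((m+1:ℕ) : ℝ)) ∘L P)).prod)
        = ((((List.range' 1 (m+1)).reverse : List ℕ)).map (fun j : ℕ =>
          P ∘L V ((j : ℝ) * t / ((m+1:ℕ) : ℝ)) (((j : ℝ) - 1) * t / ((m+1:ℕ) : ℝ)) ∘L P)).prod := by
      congr 1
      induction (List.range' 1 (m+1)).reverse with
      | nil => rfl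
      | cons a l ih =>
        simp only [List.flatMap_cons, List.map_cons, List.singleton_append, List.map_append]
        rw [← ih]
        rfl
    rw [hco, zenoProd]
    congr 1
    refine List.map_congr_left ?_
    intro j hj
    rw [List.mem_reverse, List.mem_range'_1] at hj
    have h : 1 ≤ j ∧ j ≤ m + 1 := ⟨hj.1, by omega⟩
    rw [hW_def]
    simp only [if_pos h]
    rw [mul_assoc, ContinuousLinearMap.mul_def, ContinuousLinearMap.mul_def]
  rw [hAeq, hBeq]
  -- peel the rightmost factor
  have h1x : (1 - P) x = x - P x := by
    simp [ContinuousLinearMap.sub_apply]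
  have key : zenoProd (fun j => M * W j) 1 (m+1) x - zenoProd (fun j => P * W j * P) 1 (m+1) x
      = (zenoProd (fun j => M * W j) (1+1) m ((P * W 1 * P) x)
          - zenoProd (fun j => P * W j * P) (1+1) m ((P * W 1 * P) x))
        + zenoProd (fun j => M * W j) (1+1) m ((P * W 1 * (1 - P)) x)
        + zenoProd (fun j => M * W j) (1+1) m (((M - P) * W 1) x) := by
    rw [zenoProd_succ, zenoProd_succ]
    have e1 : (zenoProd (fun j => M * W j) (1+1) m * (M * W 1)) x
        = zenoProd (fun j => M * W j) (1+1) m ((M * W 1) x) :=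
      ContinuousLinearMap.mul_apply _ _ _
    have e2 : (zenoProd (fun j => P * W j * P) (1+1) m * (P * W 1 * P)) x
        = zenoProd (fun j => P * W j * P) (1+1) m ((P * W 1 * P) x) :=
      ContinuousLinearMap.mul_apply _ _ _
    have h2 : (M * W 1) x = (P * W 1 * P) x + (P * W 1 * (1 - P)) x + ((M - P) * W 1) x := by
      simp only [ContinuousLinearMap.mul_apply, ContinuousLinearMap.sub_apply,
        ContinuousLinearMap.one_apply, map_sub]
      abel
    rw [e1, e2, h2, map_add, map_add]
    abel
  set S : ℝ := ∑ k ∈ Finset.range m, δ ^ k with hS_def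
  have hSnn : (0:ℝ) ≤ S := Finset.sum_nonneg fun k _ => pow_nonneg hδnn k
  have hAnorm : ‖zenoProd (fun j => M * W j) (1+1) m‖ ≤ 1 := by
    refine zenoProd_norm_le _ (fun j => ?_) m (1+1)
    calc ‖M * W j‖ ≤ ‖M‖ * ‖W j‖ := norm_mul_le _ _
    _ ≤ 1 := mul_le_one₀ hM (norm_nonneg _) (hW1 j)
  -- three bounds
  have hy'P : P ((P * W 1 * P) x) = (P * W 1 * P) x := by
    have h0 : P * (P * W 1 * P) = P * W 1 * P := by
      rw [← mul_assoc, ← mul_assoc, hPP]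
    have : P ((P * W 1 * P) x) = (P * (P * W 1 * P)) x :=
      (ContinuousLinearMap.mul_apply _ _ _).symm
    rw [this, h0]
  have hy'n : ‖(P * W 1 * P) x‖ ≤ ‖x‖ := by
    calc ‖(P * W 1 * P) x‖ ≤ ‖P * W 1 * P‖ * ‖x‖ := ContinuousLinearMap.le_opNorm _ _
    _ ≤ 1 * ‖x‖ := by
        refine mul_le_mul_of_nonneg_right ?_ (norm_nonneg _)
        calc ‖P * W 1 * P‖ ≤ ‖P * W 1‖ * ‖P‖ := norm_mul_le _ _
        _ ≤ ‖P * W 1‖ := mul_le_of_le_one_right (norm_nonneg _) hPn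
        _ ≤ ‖P‖ * ‖W 1‖ := norm_mul_le _ _
        _ ≤ 1 := mul_le_one₀ hPn (norm_nonneg _) (hW1 1)
    _ = ‖x‖ := one_mul _
  have hgnn : (0:ℝ) ≤ c * δ * S + c * c * δ * m * S :=
    add_nonneg (mul_nonneg (mul_nonneg hc hδnn) hSnn)
      (mul_nonneg (mul_nonneg (mul_nonneg (mul_nonneg hc hc) hδnn) (Nat.cast_nonneg m)) hSnn)
  have t1 : ‖zenoProd (fun j => M * W j) (1+1) m ((P * W 1 * P) x)
      - zenoProd (fun j => P * W j * P) (1+1) m ((P * W 1 * P) x)‖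
      ≤ (c * δ * S + c * c * δ * m * S) * ‖x‖ := by
    refine (zeno_main M P δ c W hδnn hc hM hPn hQn hPM hMPe hPP hW1 hZ1 hZ2 m (1+1) _ hy'P).trans ?_
    exact mul_le_mul_of_nonneg_left hy'n hgnn
  have t2 : ‖zenoProd (fun j => M * W j) (1+1) m ((P * W 1 * (1 - P)) x)‖ ≤ c * ‖x‖ := by
    calc ‖zenoProd (fun j => M * W j) (1+1) m ((P * W 1 * (1 - P)) x)‖
        ≤ ‖zenoProd (fun j => M * W j) (1+1) m‖ * ‖(P * W 1 * (1 - P)) x‖ :=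
          ContinuousLinearMap.le_opNorm _ _
    _ ≤ 1 * ‖(P * W 1 * (1 - P)) x‖ := mul_le_mul_of_nonneg_right hAnorm (norm_nonneg _)
    _ = ‖(P * W 1 * (1 - P)) x‖ := one_mul _
    _ ≤ ‖P * W 1 * (1 - P)‖ * ‖x‖ := ContinuousLinearMap.le_opNorm _ _
    _ ≤ c * ‖x‖ := mul_le_mul_of_nonneg_right (hZ1 1) (norm_nonneg _)
  have hu0 : P (((M - P) * W 1) x) = 0 := by
    have h0 : P * ((M - P) * W 1) = 0 := by
      rw [← mul_assoc, mul_sub, hPM, hPP, sub_self, zero_mul]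
    have : P (((M - P) * W 1) x) = (P * ((M - P) * W 1)) x :=
      (ContinuousLinearMap.mul_apply _ _ _).symm
    rw [this, h0, ContinuousLinearMap.zero_apply]
  have hun : ‖((M - P) * W 1) x‖ ≤ δ * ‖x‖ := by
    rw [ContinuousLinearMap.mul_apply]
    calc ‖(M - P) ((W 1) x)‖ ≤ ‖M - P‖ * ‖(W 1) x‖ := (M - P).le_opNorm _
    _ ≤ δ * ‖(W 1) x‖ := mul_le_mul_of_nonneg_right hQn (norm_nonneg _)
    _ ≤ δ * ‖x‖ := mul_le_mul_of_nonneg_left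
          (((W 1).le_opNorm x).trans (mul_le_of_le_one_left (norm_nonneg x) (hW1 1))) hδnn
  have t3 : ‖zenoProd (fun j => M * W j) (1+1) m (((M - P) * W 1) x)‖
      ≤ (c * S + δ ^ m) * (δ * ‖x‖) := by
    refine ((zeno_run M P δ c W hδnn hc hM hQn hPM hPP hW1 hZ1 m (1+1) _ hu0).trans ?_)
    exact mul_le_mul_of_nonneg_left hun
      (add_nonneg (mul_nonneg hc hSnn) (pow_nonneg hδnn m))
  -- combine
  have total : ‖zenoProd (fun j => M * W j) 1 (m+1) x
      - zenoProd (fun j => P * W j * P) 1 (m+1) x‖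
      ≤ (δ ^ (m+1) + c + (2 * c * (δ * S) + c * c * (m:ℝ) * (δ * S))) * ‖x‖ := by
    calc ‖zenoProd (fun j => M * W j) 1 (m+1) x - zenoProd (fun j => P * W j * P) 1 (m+1) x‖
        = ‖(zenoProd (fun j => M * W j) (1+1) m ((P * W 1 * P) x)
            - zenoProd (fun j => P * W j * P) (1+1) m ((P * W 1 * P) x))
          + zenoProd (fun j => M * W j) (1+1) m ((P * W 1 * (1 - P)) x)
          + zenoProd (fun j => M * W j) (1+1) m (((M - P) * W 1) x)‖ := by rw [key]
    _ ≤ ‖zenoProd (fun j => M * W j) (1+1) m ((P * W 1 * P) x)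
            - zenoProd (fun j => P * W j * P) (1+1) m ((P * W 1 * P) x)‖
          + ‖zenoProd (fun j => M * W j) (1+1) m ((P * W 1 * (1 - P)) x)‖
          + ‖zenoProd (fun j => M * W j) (1+1) m (((M - P) * W 1) x)‖ := norm_add₃_le
    _ ≤ (c * δ * S + c * c * δ * m * S) * ‖x‖ + c * ‖x‖ + (c * S + δ ^ m) * (δ * ‖x‖) :=
        add_le_add (add_le_add t1 t2) t3
    _ = (δ ^ (m+1) + c + (2 * c * (δ * S) + c * c * (m:ℝ) * (δ * S))) * ‖x‖ := by
        rw [pow_succ]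
        ring
  refine total.trans ?_
  refine mul_le_mul_of_nonneg_right ?_ (norm_nonneg x)
  -- final arithmetic
  have h1δ : (0:ℝ) < 1 - δ := by linarith
  have hgeom : δ * S = (δ - δ ^ (m+1)) / (1 - δ) := by
    rw [eq_div_iff h1δ.ne']
    have h := geom_sum_mul δ m
    rw [hS_def]
    linear_combination (-δ) * h
  have hE : 1 ≤ Real.exp (2 * b) := Real.one_le_exp (by positivity)
  have htb : t * b = c * ((m:ℝ) + 1) := by
    rw [hc_def, hnc]
    field_simp
  have hznn : (0:ℝ) ≤ (1 / ((m:ℝ)+1)) * (t * b * (2 + t * b)) * (δ * S) := by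
    have h2 : (0:ℝ) ≤ t * b := mul_nonneg ht1 hb
    have h3 : (0:ℝ) ≤ δ * S := mul_nonneg hδnn hSnn
    have h4 : (0:ℝ) ≤ 2 + t * b := by linarith
    exact mul_nonneg (mul_nonneg (by positivity) (mul_nonneg h2 h4)) h3
  have hmain : 2 * c * (δ * S) + c * c * (m:ℝ) * (δ * S)
      ≤ (1 / ((m:ℝ)+1)) * (t * b * (2 + t * b)) * (δ * S) := by
    have hid : (1 / ((m:ℝ)+1)) * (t * b * (2 + t * b)) * (δ * S)
        = 2 * c * (δ * S) + c * c * ((m:ℝ)+1) * (δ * S) := by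
      rw [htb]
      field_simp
    rw [hid]
    have h3 : (0:ℝ) ≤ δ * S := mul_nonneg hδnn hSnn
    nlinarith [mul_nonneg (mul_nonneg hc hc) h3]
  have hexpand : (1 / ((m+1:ℕ):ℝ)) * (t * b * (2 + t * b) * (δ - δ ^ (m+1)) / (1 - δ))
        * Real.exp (2 * b)
      = ((1 / ((m:ℝ)+1)) * (t * b * (2 + t * b)) * (δ * S)) * Real.exp (2 * b) := by
    rw [hnc, hgeom]
    ring
  have hfinal : (1 / ((m:ℝ)+1)) * (t * b * (2 + t * b)) * (δ * S)
      ≤ ((1 / ((m:ℝ)+1)) * (t * b * (2 + t * b)) * (δ * S)) * Real.exp (2 * b) := by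
    nlinarith [hznn, hE]
  rw [hexpand]
  linarith [hmain, hfinal]
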